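/- arXiv:math/0604427 — 2 statements merged into one kernel-verified Lean document; each statement's English description precedes it below -/
import Mathlib

section
/- Let p be an odd prime and z ∈ 𝔽_p with z ≠ 0, z ≠ 1 and z ≠ −1. If γ_p(z) = 0 and γ_p(z + 1) = 0, then γ_p(z²) = 0 in 𝔽_p. -/
open Finset

def mirimanoff (p : ℕ) (t : ZMod p) : ZMod p :=
  ∑ j ∈ Finset.Icc 1 (p - 1), (j : ZMod p)⁻¹ * t ^ j

lemma mir_cast_ne_zero {p : ℕ} (hp : p.Prime) {j : ℕ} (h1 : 1 ≤ j) (h2 : j ≤ p - 1) :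
    (j : ZMod p) ≠ 0 := by
  rw [Ne, ZMod.natCast_eq_zero_iff]
  intro hdvd
  have hp2 := hp.two_le
  have := Nat.le_of_dvd (by omega) hdvd
  omega

lemma mir_two_ne_zero {p : ℕ} (hp : p.Prime) (hodd : Odd p) : (2 : ZMod p) ≠ 0 := by
  have : ((2 : ℕ) : ZMod p) ≠ 0 := by
    rw [Ne, ZMod.natCast_eq_zero_iff]
    intro hdvd
    have hp2 := hp.two_le
    have := Nat.le_of_dvd (by omega) hdvd
    obtain ⟨k, hk⟩ := hodd
    omega
  simpa using this

lemma mir_choose_cast {p : ℕ} (hp : p.Prime) : ∀ i, i ≤ p - 1 →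
    ((Nat.choose (p - 1) i : ℕ) : ZMod p) = (-1) ^ i := by
  intro i
  induction i with
  | zero => intro _; simp
  | succ n ih =>
    intro hn
    have hp2 := hp.two_le
    have ihn := ih (by omega)
    have hpascal : Nat.choose p (n + 1) = Nat.choose (p - 1) n + Nat.choose (p - 1) (n + 1) := by
      conv_lhs => rw [show p = (p - 1) + 1 by omega]
      exact Nat.choose_succ_succ _ _
    have hdvd : p ∣ Nat.choose p (n + 1) :=
      hp.dvd_choose_self (by omega) (by omega)
    have hz : ((Nat.choose p (n + 1) : ℕ) : ZMod p) = 0 := by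
      rw [ZMod.natCast_eq_zero_iff]; exact hdvd
    rw [hpascal] at hz
    push_cast at hz
    rw [ihn] at hz
    have : ((Nat.choose (p - 1) (n + 1) : ℕ) : ZMod p) = -((-1) ^ n) := by
      linear_combination hz
    rw [this]
    ring

lemma mir_sum_inv_zero {p : ℕ} (hp : p.Prime) (hodd : Odd p) :
    ∑ j ∈ Finset.Icc 1 (p - 1), (j : ZMod p)⁻¹ = 0 := by
  haveI : Fact p.Prime := ⟨hp⟩
  have hp2 := hp.two_le
  apply Finset.sum_involution (fun j _ => p - j)
  · intro j hj
    rw [Finset.mem_Icc] at hj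
    have hcast : ((p - j : ℕ) : ZMod p) = -(j : ZMod p) := by
      rw [Nat.cast_sub (by omega), ZMod.natCast_self, zero_sub]
    rw [hcast, inv_neg, add_neg_cancel]
  · intro j hj _
    rw [Finset.mem_Icc] at hj
    obtain ⟨k, hk⟩ := hodd
    omega
  · intro j hj
    rw [Finset.mem_Icc] at hj ⊢
    omega
  · intro j hj
    rw [Finset.mem_Icc] at hj
    omega

lemma mir_one_sub {p : ℕ} (hp : p.Prime) (hodd : Odd p) (w : ZMod p) :
    mirimanoff p (1 - w) = mirimanoff p w := by
  have hp2 := hp.two_le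
  unfold mirimanoff
  have step1 : ∀ j ∈ Finset.Icc 1 (p - 1),
      (j : ZMod p)⁻¹ * (1 - w) ^ j =
        ∑ i ∈ Finset.range p, (j : ZMod p)⁻¹ * ((-w) ^ i * (Nat.choose j i : ZMod p)) := by
    intro j hj
    rw [Finset.mem_Icc] at hj
    have hpow : (1 - w) ^ j = ∑ i ∈ Finset.range (j + 1), (-w) ^ i * (Nat.choose j i : ZMod p) := by
      have : (1 - w) ^ j = (-w + 1) ^ j := by ring
      rw [this, add_pow]
      apply Finset.sum_congr rfl
      intro i _
      rw [one_pow, mul_one]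
    rw [hpow, Finset.mul_sum]
    apply Finset.sum_subset
    · intro i hi
      rw [Finset.mem_range] at hi ⊢
      omega
    · intro i _ hi
      rw [Finset.mem_range, not_lt] at hi
      rw [Nat.choose_eq_zero_of_lt (by omega)]
      simp
  rw [Finset.sum_congr rfl step1, Finset.sum_comm]
  have step2 : ∀ i ∈ Finset.range p,
      (∑ j ∈ Finset.Icc 1 (p - 1), (j : ZMod p)⁻¹ * ((-w) ^ i * (Nat.choose j i : ZMod p)))
        = if i = 0 then 0 else (i : ZMod p)⁻¹ * w ^ i := by
    intro i hi
    rw [Finset.mem_range] at hi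
    by_cases h0 : i = 0
    · subst h0
      rw [if_pos rfl]
      have hc0 : ∀ j ∈ Finset.Icc 1 (p - 1),
          (j : ZMod p)⁻¹ * ((-w) ^ 0 * (Nat.choose j 0 : ZMod p)) = (j : ZMod p)⁻¹ := by
        intro j _; simp
      rw [Finset.sum_congr rfl hc0, mir_sum_inv_zero hp hodd]
    · rw [if_neg h0]
      have hi1 : 1 ≤ i := by omega
      have hinz : (i : ZMod p) ≠ 0 := mir_cast_ne_zero hp hi1 (by omega)
      have hterm : ∀ j ∈ Finset.Icc 1 (p - 1),
          (j : ZMod p)⁻¹ * ((-w) ^ i * (Nat.choose j i : ZMod p))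
            = (-w) ^ i * ((i : ZMod p)⁻¹ * (Nat.choose (j - 1) (i - 1) : ZMod p)) := by
        intro j hj
        rw [Finset.mem_Icc] at hj
        have hjnz : (j : ZMod p) ≠ 0 := mir_cast_ne_zero hp hj.1 hj.2
        have hnat : j * Nat.choose (j - 1) (i - 1) = Nat.choose j i * i := by
          have := Nat.add_one_mul_choose_eq (j - 1) (i - 1)
          have hj1 : (j - 1) + 1 = j := by omega
          have hi1' : (i - 1) + 1 = i := by omega
          have hji : (j - 1) + 1 = j := by omega
          rw [hj1, hi1'] at this
          exact this
        have hcast : (j : ZMod p) * (Nat.choose (j - 1) (i - 1) : ZMod p)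
            = (Nat.choose j i : ZMod p) * (i : ZMod p) := by
          have := congrArg (fun n : ℕ => (n : ZMod p)) hnat
          push_cast at this
          exact this
        have key : (j : ZMod p)⁻¹ * (Nat.choose j i : ZMod p)
            = (i : ZMod p)⁻¹ * (Nat.choose (j - 1) (i - 1) : ZMod p) := by
          haveI : Fact p.Prime := ⟨hp⟩
          have hii : (i : ZMod p)⁻¹ * (i : ZMod p) = 1 := inv_mul_cancel₀ hinz
          have hjj : (j : ZMod p)⁻¹ * (j : ZMod p) = 1 := inv_mul_cancel₀ hjnz
          linear_combination (-((i : ZMod p)⁻¹ * (j : ZMod p)⁻¹)) * hcast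
            - ((j : ZMod p)⁻¹ * (Nat.choose j i : ZMod p)) * hii
            + ((i : ZMod p)⁻¹ * (Nat.choose (j - 1) (i - 1) : ZMod p)) * hjj
        linear_combination ((-w) ^ i) * key
      rw [Finset.sum_congr rfl hterm, ← Finset.mul_sum, ← Finset.mul_sum]
      have hsum : ∑ j ∈ Finset.Icc 1 (p - 1), (Nat.choose (j - 1) (i - 1) : ZMod p)
          = ((Nat.choose (p - 1) i : ℕ) : ZMod p) := by
        have hre : ∑ j ∈ Finset.Icc 1 (p - 1), Nat.choose (j - 1) (i - 1)
            = ∑ m ∈ Finset.Icc 0 (p - 2), Nat.choose m (i - 1) := by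
          apply Finset.sum_nbij' (fun j => j - 1) (fun m => m + 1)
          · intro a ha; rw [Finset.mem_Icc] at ha ⊢; omega
          · intro a ha; rw [Finset.mem_Icc] at ha ⊢; omega
          · intro a ha; rw [Finset.mem_Icc] at ha; omega
          · intro a ha; rw [Finset.mem_Icc] at ha; omega
          · intro a _; rfl
        have hre2 : ∑ m ∈ Finset.Icc (i - 1) (p - 2), Nat.choose m (i - 1)
            = ∑ m ∈ Finset.Icc 0 (p - 2), Nat.choose m (i - 1) := by
          apply Finset.sum_subset
          · intro m hm; rw [Finset.mem_Icc] at hm ⊢; omega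
          · intro m hm hm'
            rw [Finset.mem_Icc] at hm hm'
            apply Nat.choose_eq_zero_of_lt
            omega
        have hhs : ∑ m ∈ Finset.Icc (i - 1) (p - 2), Nat.choose m (i - 1)
            = Nat.choose (p - 1) i := by
          rw [Nat.sum_Icc_choose]
          congr 1 <;> omega
        have hnat2 : ∑ j ∈ Finset.Icc 1 (p - 1), Nat.choose (j - 1) (i - 1)
            = Nat.choose (p - 1) i := by
          rw [hre, ← hre2]; exact hhs
        rw [← Nat.cast_sum, hnat2]
      rw [hsum, mir_choose_cast hp i (by omega)]
      have hneg : (-w) ^ i = (-1 : ZMod p) ^ i * w ^ i := by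
        rw [← mul_pow]; ring_nf
      rw [hneg]
      have : (-1 : ZMod p) ^ i * ((-1) ^ i) = 1 := by
        rw [← mul_pow, neg_mul_neg, one_mul, one_pow]
      calc (-1 : ZMod p) ^ i * w ^ i * ((i : ZMod p)⁻¹ * (-1) ^ i)
          = ((-1 : ZMod p) ^ i * (-1) ^ i) * ((i : ZMod p)⁻¹ * w ^ i) := by ring
        _ = (i : ZMod p)⁻¹ * w ^ i := by rw [this, one_mul]
  rw [Finset.sum_congr rfl step2]
  rw [← Finset.sum_subset (s₁ := Finset.Icc 1 (p - 1))
    (f := fun i => if i = 0 then (0 : ZMod p) else (i : ZMod p)⁻¹ * w ^ i)]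
  · apply Finset.sum_congr rfl
    intro i hi
    rw [Finset.mem_Icc] at hi
    rw [if_neg (by omega)]
  · intro i hi
    rw [Finset.mem_Icc] at hi
    rw [Finset.mem_range]
    omega
  · intro i hi hi'
    rw [Finset.mem_range] at hi
    rw [Finset.mem_Icc] at hi'
    rw [if_pos (by omega)]

lemma mir_sq_eq {p : ℕ} (hp : p.Prime) (hodd : Odd p) (z : ZMod p) :
    mirimanoff p (z ^ 2) =
      ∑ k ∈ Finset.Icc 1 (p - 1),
        (if Even k then (2 : ZMod p) else 2 * z) * ((k : ZMod p)⁻¹ * z ^ k) := by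
  haveI : Fact p.Prime := ⟨hp⟩
  have hp2 := hp.two_le
  obtain ⟨c, hc⟩ := hodd
  have h2ne : (2 : ZMod p) ≠ 0 := mir_two_ne_zero hp ⟨c, hc⟩
  have h22 : (2 : ZMod p) * (2 : ZMod p)⁻¹ = 1 := mul_inv_cancel₀ h2ne
  unfold mirimanoff
  apply Finset.sum_nbij' (fun j => if 2 * j ≤ p - 1 then 2 * j else 2 * j - p)
    (fun k => if Even k then k / 2 else (k + p) / 2)
  · intro a ha
    rw [Finset.mem_Icc] at ha ⊢
    split <;> omega
  · intro b hb
    rw [Finset.mem_Icc] at hb ⊢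
    rcases Nat.even_or_odd b with he | ho
    · rw [if_pos he]
      rw [Nat.even_iff] at he
      omega
    · rw [if_neg (Nat.not_even_iff_odd.mpr ho)]
      rw [Nat.odd_iff] at ho
      omega
  · intro a ha
    rw [Finset.mem_Icc] at ha
    by_cases h : 2 * a ≤ p - 1
    · rw [if_pos h]
      have : (if Even (2 * a) then 2 * a / 2 else (2 * a + p) / 2) = 2 * a / 2 :=
        if_pos (even_two_mul a)
      rw [this]
      omega
    · rw [if_neg h]
      have hodd' : ¬ Even (2 * a - p) := by
        rw [Nat.even_iff]; omega
      have : (if Even (2 * a - p) then (2 * a - p) / 2 else (2 * a - p + p) / 2)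
          = (2 * a - p + p) / 2 := if_neg hodd'
      rw [this]
      omega
  · intro b hb
    rw [Finset.mem_Icc] at hb
    rcases Nat.even_or_odd b with he | ho
    · have h1 : (if Even b then b / 2 else (b + p) / 2) = b / 2 := if_pos he
      rw [h1]
      rw [Nat.even_iff] at he
      rw [if_pos (by omega)]
      omega
    · have hob := Nat.odd_iff.mp ho
      have h1 : (if Even b then b / 2 else (b + p) / 2) = (b + p) / 2 :=
        if_neg (Nat.not_even_iff_odd.mpr ho)
      rw [h1]
      rw [if_neg (by omega)]
      omega
  · intro j hj
    rw [Finset.mem_Icc] at hj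
    have hjnz : (j : ZMod p) ≠ 0 := mir_cast_ne_zero hp hj.1 hj.2
    have hzsq : (z ^ 2) ^ j = z ^ (2 * j) := by
      rw [← pow_mul, mul_comm]
    by_cases h : 2 * j ≤ p - 1
    · rw [if_pos h, if_pos (even_two_mul j)]
      have hcast : ((2 * j : ℕ) : ZMod p) = 2 * (j : ZMod p) := by push_cast; ring
      rw [hcast, hzsq, mul_inv]
      linear_combination (-((j : ZMod p)⁻¹ * z ^ (2 * j))) * h22
    · rw [if_neg h]
      have hodd' : ¬ Even (2 * j - p) := by rw [Nat.even_iff]; omega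
      rw [if_neg hodd']
      have hcast : ((2 * j - p : ℕ) : ZMod p) = 2 * (j : ZMod p) := by
        rw [Nat.cast_sub (by omega), ZMod.natCast_self, sub_zero]
        push_cast; ring
      have hpow : z ^ (2 * j) = z ^ (2 * j - p) * z := by
        conv_lhs => rw [show 2 * j = (2 * j - p) + p by omega]
        rw [pow_add, ZMod.pow_card]
      rw [hcast, hzsq, hpow, mul_inv]
      linear_combination (-((j : ZMod p)⁻¹ * (z ^ (2 * j - p) * z))) * h22

theorem mirimanoff_sq_zero (p : ℕ) (hp : p.Prime) (hodd : Odd p)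
    (z : ZMod p) (hz0 : z ≠ 0) (hz1 : z ≠ 1) (hzm1 : z ≠ -1)
    (h1 : mirimanoff p z = 0) (h2 : mirimanoff p (z + 1) = 0) :
    mirimanoff p (z ^ 2) = 0 := by
  classical
  haveI : Fact p.Prime := ⟨hp⟩
  have hp2 := hp.two_le
  have h2ne : (2 : ZMod p) ≠ 0 := mir_two_ne_zero hp hodd
  -- φ(-z) = φ(1 - (-z)) = φ(z + 1) = 0
  have hneg : mirimanoff p (-z) = 0 := by
    have := mir_one_sub hp hodd (-z)
    rw [sub_neg_eq_add, add_comm] at this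
    rw [← this, h2]
  set F : ℕ → ZMod p := fun k => (k : ZMod p)⁻¹ * z ^ k with hF
  set E : ZMod p := ∑ k ∈ (Finset.Icc 1 (p - 1)).filter (fun k => Even k), F k with hE
  set O : ZMod p := ∑ k ∈ (Finset.Icc 1 (p - 1)).filter (fun k => ¬ Even k), F k with hO
  have hEO : E + O = 0 := by
    rw [hE, hO, Finset.sum_filter_add_sum_filter_not]
    rw [← h1]; rfl
  have hEmO : E - O = 0 := by
    have : mirimanoff p (-z) =
        (∑ k ∈ (Finset.Icc 1 (p - 1)).filter (fun k => Even k), F k)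
          - ∑ k ∈ (Finset.Icc 1 (p - 1)).filter (fun k => ¬ Even k), F k := by
      unfold mirimanoff
      rw [← Finset.sum_filter_add_sum_filter_not (Finset.Icc 1 (p - 1)) (fun k => Even k)]
      have he : ∀ k ∈ (Finset.Icc 1 (p - 1)).filter (fun k => Even k),
          (k : ZMod p)⁻¹ * (-z) ^ k = F k := by
        intro k hk
        rw [Finset.mem_filter] at hk
        rw [hF]
        simp only []
        rw [hk.2.neg_pow]
      have hon : ∀ k ∈ (Finset.Icc 1 (p - 1)).filter (fun k => ¬ Even k),
          (k : ZMod p)⁻¹ * (-z) ^ k = -(F k) := by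
        intro k hk
        rw [Finset.mem_filter] at hk
        have hodd'' : Odd k := Nat.not_even_iff_odd.mp hk.2
        rw [hF]
        simp only []
        rw [hodd''.neg_pow]
        ring
      rw [Finset.sum_congr rfl he, Finset.sum_congr rfl hon, Finset.sum_neg_distrib]
      ring
    rw [hneg] at this
    rw [hE, hO, this]
  have key := mir_sq_eq hp hodd z
  have hsplit : mirimanoff p (z ^ 2) = 2 * E + 2 * z * O := by
    rw [key]
    rw [← Finset.sum_filter_add_sum_filter_not (Finset.Icc 1 (p - 1)) (fun k => Even k)]
    have he : ∀ k ∈ (Finset.Icc 1 (p - 1)).filter (fun k => Even k),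
        (if Even k then (2 : ZMod p) else 2 * z) * ((k : ZMod p)⁻¹ * z ^ k) = 2 * F k := by
      intro k hk
      rw [Finset.mem_filter] at hk
      rw [if_pos hk.2]
    have hon : ∀ k ∈ (Finset.Icc 1 (p - 1)).filter (fun k => ¬ Even k),
        (if Even k then (2 : ZMod p) else 2 * z) * ((k : ZMod p)⁻¹ * z ^ k) = 2 * z * F k := by
      intro k hk
      rw [Finset.mem_filter] at hk
      rw [if_neg hk.2]
    rw [Finset.sum_congr rfl he, Finset.sum_congr rfl hon, ← Finset.mul_sum, ← Finset.mul_sum]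
  have hEzero : E = 0 := by
    have h2E : 2 * E = 0 := by linear_combination hEO + hEmO
    rcases mul_eq_zero.mp h2E with h | h
    · exact absurd h h2ne
    · exact h
  have hOzero : O = 0 := by linear_combination hEO - hEzero
  rw [hsplit, hEzero, hOzero]
  ring
end

section
/- Let p be an odd prime and let e, d ∈ 𝔽_p with e ≠ 0, e ≠ 1, d ≠ 0, d ≠ 1 and e + d ≠ 1. Then (e + d − 1)·(γ_p((d − 1)/(e + d − 1)) − γ_p(d/(e + d − 1))) = γ_p(e) − γ_p(d) in 𝔽_p. -/
open Finset

/-- `(p-1).choose k ≡ (-1)^k mod p`. -/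
lemma choose_pred_cast (p : ℕ) [hp : Fact p.Prime] {k : ℕ} (hk : k ≤ p - 1) :
    (((p - 1).choose k : ℕ) : ZMod p) = (-1) ^ k := by
  induction k with
  | zero => simp
  | succ k ih =>
    have hp2 := hp.out.two_le
    have hk' : k ≤ p - 1 := by omega
    have h1 : (p.choose (k + 1) : ZMod p) = 0 := by
      rw [ZMod.natCast_eq_zero_iff]
      exact Nat.Prime.dvd_choose_self hp.out (Nat.succ_ne_zero k) (by omega)
    have h2 : p.choose (k + 1) = (p - 1).choose k + (p - 1).choose (k + 1) := by
      have hp1 : p - 1 + 1 = p := by omega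
      conv_lhs => rw [← hp1]
      exact Nat.choose_succ_succ _ _
    rw [h2] at h1
    push_cast at h1
    rw [ih hk'] at h1
    have : (((p - 1).choose (k + 1) : ℕ) : ZMod p) = -(-1) ^ k := by linear_combination h1
    rw [this, pow_succ]
    ring

/-- The coefficient `C(p,j)/p` reduces to `(-1)^(j-1) j⁻¹` mod `p`. -/
lemma coeff_cast (p : ℕ) [hp : Fact p.Prime] {j : ℕ} (h1 : 1 ≤ j) (h2 : j ≤ p - 1) :
    ((p.choose j / p : ℕ) : ZMod p) = (-1) ^ (j - 1) * (j : ZMod p)⁻¹ := by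
  have hp2 := hp.out.two_le
  have hdvd : p ∣ p.choose j := Nat.Prime.dvd_choose_self hp.out (by omega) (by omega)
  have key : (p.choose j / p) * j = (p - 1).choose (j - 1) := by
    have h := Nat.add_one_mul_choose_eq (p - 1) (j - 1)
    have hp1 : p - 1 + 1 = p := by omega
    have hj1 : j - 1 + 1 = j := by omega
    rw [hp1, hj1] at h
    have hc : p * (p.choose j / p) = p.choose j := Nat.mul_div_cancel' hdvd
    have : p * ((p.choose j / p) * j) = p * ((p - 1).choose (j - 1)) := by
      rw [← Nat.mul_assoc, hc, ← h]
    exact Nat.eq_of_mul_eq_mul_left (by omega) this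
  have hcast : ((p.choose j / p : ℕ) : ZMod p) * (j : ZMod p) = (-1) ^ (j - 1) := by
    rw [← Nat.cast_mul, key, choose_pred_cast p (by omega)]
  have hj0 : (j : ZMod p) ≠ 0 := by
    rw [Ne, ZMod.natCast_eq_zero_iff]
    intro hdj
    have := Nat.le_of_dvd (by omega) hdj
    omega
  field_simp
  linear_combination hcast

/-- Integer model of the (signed/homogenized) Mirimanoff sum. -/
def phiInt (p : ℕ) (u v : ℤ) : ℤ :=
  ∑ j ∈ Icc 1 (p - 1), ((p.choose j / p : ℕ) : ℤ) * u ^ j * v ^ (p - j)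

lemma p_mul_phiInt (p : ℕ) [hp : Fact p.Prime] (u v : ℤ) :
    (p : ℤ) * phiInt p u v = (u + v) ^ p - u ^ p - v ^ p := by
  have hp2 := hp.out.two_le
  have hsum : ∀ j ∈ Icc 1 (p - 1),
      (p : ℤ) * (((p.choose j / p : ℕ) : ℤ) * u ^ j * v ^ (p - j))
        = u ^ j * v ^ (p - j) * (p.choose j : ℤ) := by
    intro j hj
    rw [mem_Icc] at hj
    have hdvd : p ∣ p.choose j := Nat.Prime.dvd_choose_self hp.out (by omega) (by omega)
    have : (p : ℤ) * ((p.choose j / p : ℕ) : ℤ) = (p.choose j : ℤ) := by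
      rw [← Nat.cast_mul, Nat.mul_div_cancel' hdvd]
    calc (p : ℤ) * (((p.choose j / p : ℕ) : ℤ) * u ^ j * v ^ (p - j))
        = ((p : ℤ) * ((p.choose j / p : ℕ) : ℤ)) * u ^ j * v ^ (p - j) := by ring
      _ = u ^ j * v ^ (p - j) * (p.choose j : ℤ) := by rw [this]; ring
  rw [phiInt, Finset.mul_sum, Finset.sum_congr rfl hsum]
  have hbin : (u + v) ^ p = ∑ j ∈ range (p + 1), u ^ j * v ^ (p - j) * (p.choose j : ℤ) :=
    add_pow u v p
  have hset : range (p + 1) = insert 0 (insert p (Icc 1 (p - 1))) := by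
    ext x
    simp only [mem_range, mem_insert, mem_Icc]
    omega
  have h0 : (0 : ℕ) ∉ insert p (Icc 1 (p - 1)) := by
    simp only [mem_insert, mem_Icc]
    omega
  have hpn : p ∉ Icc 1 (p - 1) := by
    simp only [mem_Icc]
    omega
  rw [hset, Finset.sum_insert h0, Finset.sum_insert hpn] at hbin
  simp only [pow_zero, Nat.sub_zero, Nat.choose_zero_right, Nat.choose_self, Nat.sub_self,
    Nat.cast_one, one_mul, mul_one] at hbin
  linarith [hbin]

/-- ZMod model of the homogenized Mirimanoff sum. -/
def phiZ (p : ℕ) (u v : ZMod p) : ZMod p :=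
  ∑ j ∈ Icc 1 (p - 1), (j : ZMod p)⁻¹ * u ^ j * v ^ (p - j)

lemma phiInt_cast (p : ℕ) [hp : Fact p.Prime] (u v : ℤ) :
    ((phiInt p u v : ℤ) : ZMod p) = - phiZ p (-(u : ZMod p)) (v : ZMod p) := by
  rw [phiInt, phiZ, Int.cast_sum, ← Finset.sum_neg_distrib]
  refine Finset.sum_congr rfl ?_
  intro j hj
  rw [mem_Icc] at hj
  rw [Int.cast_mul, Int.cast_mul, Int.cast_pow, Int.cast_pow, Int.cast_natCast,
    coeff_cast p hj.1 hj.2]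
  have hj1 : j - 1 + 1 = j := by omega
  have : (-(u : ZMod p)) ^ j = (-1) ^ j * (u : ZMod p) ^ j := by
    rw [neg_pow]
  rw [this]
  have hsign : ((-1 : ZMod p) ^ (j - 1) : ZMod p) = -(-1 : ZMod p) ^ j := by
    conv_rhs => rw [← hj1]
    rw [pow_succ]
    ring
  rw [hsign]
  ring

lemma phiZ_eq_mirimanoff (p : ℕ) [hp : Fact p.Prime] (u v : ZMod p) (hv : v ≠ 0) :
    phiZ p u v = v * mirimanoff p (u / v) := by
  rw [phiZ, mirimanoff, Finset.mul_sum]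
  refine Finset.sum_congr rfl ?_
  intro j hj
  rw [mem_Icc] at hj
  have hp2 := hp.out.two_le
  have hvj : v ^ j ≠ 0 := pow_ne_zero _ hv
  have hpow : v ^ (p - j) * v ^ j = v := by
    rw [← pow_add]
    have : p - j + j = p := by omega
    rw [this, ZMod.pow_card]
  have hpow2 : v ^ (p - j) = v / v ^ j := by rw [eq_div_iff hvj]; exact hpow
  rw [div_pow, hpow2]
  ring

lemma key_int (p : ℕ) [hp : Fact p.Prime] (hodd : Odd p) (E D : ℤ) :
    phiInt p (-(D - 1)) (E + D - 1) - phiInt p (-D) (E + D - 1)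
      - phiInt p (-E) 1 + phiInt p (-D) 1 = 0 := by
  have hp0 : (p : ℤ) ≠ 0 := by
    have := hp.out.pos
    exact_mod_cast this.ne'
  apply mul_left_cancel₀ hp0
  rw [mul_zero, mul_add, mul_sub, mul_sub, p_mul_phiInt, p_mul_phiInt, p_mul_phiInt,
    p_mul_phiInt]
  have b1 : -(D - 1) + (E + D - 1) = E := by ring
  have b2 : -D + (E + D - 1) = E - 1 := by ring
  have b3 : -E + 1 = -(E - 1) := by ring
  have b4 : -D + 1 = -(D - 1) := by ring
  rw [b1, b2, b3, b4]
  simp only [Odd.neg_pow hodd, one_pow]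
  ring

theorem mirimanoff_ed_relation (p : ℕ) [hp : Fact p.Prime] (hodd : Odd p)
    (e d : ZMod p) (he0 : e ≠ 0) (he1 : e ≠ 1) (hd0 : d ≠ 0) (hd1 : d ≠ 1)
    (hed : e + d ≠ 1) :
    (e + d - 1) * (mirimanoff p ((d - 1) / (e + d - 1)) - mirimanoff p (d / (e + d - 1))) =
      mirimanoff p e - mirimanoff p d := by
  have hs : e + d - 1 ≠ 0 := sub_ne_zero.mpr hed
  set E : ℤ := (e.val : ℤ) with hE
  set D : ℤ := (d.val : ℤ) with hD
  have hEe : ((E : ℤ) : ZMod p) = e := by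
    rw [hE]
    push_cast
    exact ZMod.natCast_zmod_val e
  have hDd : ((D : ℤ) : ZMod p) = d := by
    rw [hD]
    push_cast
    exact ZMod.natCast_zmod_val d
  have hkey := key_int p hodd E D
  have hcast : ((phiInt p (-(D - 1)) (E + D - 1) - phiInt p (-D) (E + D - 1)
      - phiInt p (-E) 1 + phiInt p (-D) 1 : ℤ) : ZMod p) = 0 := by
    rw [hkey]; exact Int.cast_zero
  push_cast [phiInt_cast] at hcast
  rw [hEe, hDd] at hcast
  simp only [neg_neg] at hcast
  have h1 : phiZ p (d - 1) (e + d - 1) = (e + d - 1) * mirimanoff p ((d - 1) / (e + d - 1)) :=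
    phiZ_eq_mirimanoff p _ _ hs
  have h2 : phiZ p d (e + d - 1) = (e + d - 1) * mirimanoff p (d / (e + d - 1)) :=
    phiZ_eq_mirimanoff p _ _ hs
  have h3 : phiZ p e 1 = mirimanoff p e := by
    rw [phiZ_eq_mirimanoff p e 1 one_ne_zero, div_one, one_mul]
  have h4 : phiZ p d 1 = mirimanoff p d := by
    rw [phiZ_eq_mirimanoff p d 1 one_ne_zero, div_one, one_mul]
  rw [h1, h2, h3, h4] at hcast
  linear_combination -hcast
end
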